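/- arXiv:1703.04367 — 5 statements merged into one kernel-verified Lean document; each statement's English description precedes it below -/
import Mathlib

section
/- A population protocol is well-specified and silent if and only if it satisfies Termination and NoSplitTerminal. More precisely: (a) a population protocol is silent if and only if it satisfies Termination, and (b) a silent population protocol is well-specified if and only if it satisfies NoSplitTerminal. -/
/-! Formalization of population protocols (Angluin et al.), following
"Towards Efficient Verification of Population Protocols". -/

namespace PopProt

/-- A transition `(p, q) ↦ (p', q')`. -/
abbrev PTrans (Q : Type*) := Q × Q × Q × Q

variable {Q : Type*} [Fintype Q] [DecidableEq Q]

/-- `pre t` is the multiset of the two states consumed by transition `t`. -/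
def pre (t : PTrans Q) : Multiset Q := {t.1, t.2.1}

/-- `post t` is the multiset of the two states produced by transition `t`. -/
def post (t : PTrans Q) : Multiset Q := {t.2.2.1, t.2.2.2}

/-- A transition is silent if it cannot change the current configuration. -/
def SilentT (t : PTrans Q) : Prop := pre t = post t

instance : DecidablePred (SilentT (Q := Q)) := fun t => by
  unfold SilentT; infer_instance

/-- Transitions of the form `(p, q) ↦ (p, q)`. -/
def IsSilentPair (t : PTrans Q) : Prop := ∃ p q : Q, t = (p, q, p, q)

instance : DecidablePred (IsSilentPair (Q := Q)) := fun t => by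
  unfold IsSilentPair; infer_instance

/-- A population protocol with states `Q` and input alphabet `A`.
Configurations are multisets over `Q` of cardinality at least 2. -/
structure Protocol (Q A : Type*) [Fintype Q] [DecidableEq Q] [Fintype A] where
  T : Finset (PTrans Q)
  total : ∀ p q : Q, ∃ p' q' : Q, (p, q, p', q') ∈ T
  inp : A → Q
  out : Q → Bool

/-- `C →t C'`. -/
def StepBy (t : PTrans Q) (C C' : Multiset Q) : Prop :=
  pre t ≤ C ∧ C' = C - pre t + post t

/-- One step of the protocol with transition set `T`. -/
def Step (T : Finset (PTrans Q)) (C C' : Multiset Q) : Prop :=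
  ∃ t ∈ T, StepBy t C C'

/-- Reachability `C →* C'`. -/
def Reach (T : Finset (PTrans Q)) : Multiset Q → Multiset Q → Prop :=
  Relation.ReflTransGen (Step T)

/-- `C →w C'` for a finite sequence `w` of transitions. -/
def SeqStep (T : Finset (PTrans Q)) : List (PTrans Q) → Multiset Q → Multiset Q → Prop
  | [], C, C' => C' = C
  | t :: w, C, C' => t ∈ T ∧ ∃ D, StepBy t C D ∧ SeqStep T w D C'

/-- An execution: an infinite sequence of configurations related by steps. -/
def IsExec (T : Finset (PTrans Q)) (e : ℕ → Multiset Q) : Prop :=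
  2 ≤ Multiset.card (e 0) ∧ ∀ i, Step T (e i) (e (i + 1))

/-- Fairness: if a step `C → C'` is possible and `C` occurs infinitely often,
then the step is taken infinitely often. -/
def Fair (T : Finset (PTrans Q)) (e : ℕ → Multiset Q) : Prop :=
  ∀ C C' : Multiset Q, Step T C C' →
    {i | e i = C}.Infinite → {j | e j = C ∧ e (j + 1) = C'}.Infinite

/-- An execution is silent if it is eventually constant. -/
def SilentExec (e : ℕ → Multiset Q) : Prop := ∃ n : ℕ, ∀ i ≥ n, e i = e n

/-- A configuration is terminal if every transition enabled at it is silent. -/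
def Terminal (T : Finset (PTrans Q)) (C : Multiset Q) : Prop :=
  ∀ t ∈ T, pre t ≤ C → SilentT t

/-- `C` is a consensus configuration with output `b`. -/
def Consensus (out : Q → Bool) (C : Multiset Q) (b : Bool) : Prop :=
  ∀ q ∈ C, out q = b

/-- An execution stabilizes to `b`. -/
def Stabilizes (out : Q → Bool) (e : ℕ → Multiset Q) (b : Bool) : Prop :=
  ∃ n : ℕ, ∀ i ≥ n, Consensus out (e i) b

variable {A : Type*} [Fintype A]

/-- The initial configuration determined by input `X`. -/
def init (P : Protocol Q A) (X : Multiset A) : Multiset Q := X.map P.inp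

/-- A protocol is silent if every fair execution from every configuration is silent. -/
def IsSilentProtocol (P : Protocol Q A) : Prop :=
  ∀ e : ℕ → Multiset Q, IsExec P.T e → Fair P.T e → SilentExec e

/-- A protocol is well-specified if for every input every fair execution from the
corresponding initial configuration stabilizes to a common boolean value. -/
def WellSpecified (P : Protocol Q A) : Prop :=
  ∀ X : Multiset A, 2 ≤ Multiset.card X → ∃ b : Bool,
    ∀ e : ℕ → Multiset Q, e 0 = init P X → (∀ i, Step P.T (e i) (e (i + 1))) →
      Fair P.T e → Stabilizes P.out e b

/-- A protocol computes the predicate `φ`. -/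
def Computes (P : Protocol Q A) (φ : Multiset A → Bool) : Prop :=
  ∀ X : Multiset A, 2 ≤ Multiset.card X →
    ∀ e : ℕ → Multiset Q, e 0 = init P X → (∀ i, Step P.T (e i) (e (i + 1))) →
      Fair P.T e → Stabilizes P.out e (φ X)

/-- Termination: from every configuration some terminal configuration is reachable. -/
def Termination (P : Protocol Q A) : Prop :=
  ∀ C : Multiset Q, 2 ≤ Multiset.card C →
    ∃ C' : Multiset Q, Reach P.T C C' ∧ Terminal P.T C'

/-- NoSplitTerminal: all terminal configurations reachable from an initial configuration
are consensus configurations with one common output. -/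
def NoSplitTerminal (P : Protocol Q A) : Prop :=
  ∀ X : Multiset A, 2 ≤ Multiset.card X → ∃ b : Bool,
    ∀ C' : Multiset Q, Reach P.T (init P X) C' → Terminal P.T C' →
      Consensus P.out C' b

/-- All transitions of the form `(p, q) ↦ (p, q)`. -/
def silents (Q : Type*) [Fintype Q] [DecidableEq Q] : Finset (PTrans Q) :=
  Finset.univ.image fun pq : Q × Q => (pq.1, pq.2, pq.1, pq.2)

/-- The transition set of the induced protocol `P[S]`. -/
def induced (S : Finset (PTrans Q)) : Finset (PTrans Q) := S ∪ silents Q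

/-- `(Ts 0, …, Ts (n-1))` is an ordered partition witnessing LayeredTermination. -/
def LayeredWitness (P : Protocol Q A) (n : ℕ) (Ts : Fin n → Finset (PTrans Q)) : Prop :=
  (∀ i, (Ts i).Nonempty) ∧
  (∀ i j, i ≠ j → Disjoint (Ts i) (Ts j)) ∧
  Finset.univ.biUnion Ts = P.T ∧
  ∀ i : Fin n,
    (∀ e : ℕ → Multiset Q, IsExec (induced (Ts i)) e → SilentExec e) ∧
    (∀ C C' : Multiset Q, 2 ≤ Multiset.card C →
      Reach (induced (Ts i)) C C' →
      Terminal (induced ((Finset.univ.filter fun j => j < i).biUnion Ts)) C →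
      Terminal (induced ((Finset.univ.filter fun j => j < i).biUnion Ts)) C')

/-- LayeredTermination. -/
def LayeredTermination (P : Protocol Q A) : Prop :=
  ∃ (n : ℕ) (Ts : Fin n → Finset (PTrans Q)), LayeredWitness P n Ts

/-- `•R`, relative to the transition set `T`. -/
def preSetOf (T : Finset (PTrans Q)) (R : Finset Q) : Finset (PTrans Q) :=
  T.filter fun t => ∃ q ∈ R, q ∈ post t

/-- `R•`, relative to the transition set `T`. -/
def postSetOf (T : Finset (PTrans Q)) (R : Finset Q) : Finset (PTrans Q) :=
  T.filter fun t => ∃ q ∈ R, q ∈ pre t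

/-- `R` is a `U`-trap: `R• ∩ U ⊆ •R`. -/
def IsTrap (T U : Finset (PTrans Q)) (R : Finset Q) : Prop :=
  postSetOf T R ∩ U ⊆ preSetOf T R

/-- `R` is a `U`-siphon: `•R ∩ U ⊆ R•`. -/
def IsSiphon (T U : Finset (PTrans Q)) (R : Finset Q) : Prop :=
  preSetOf T R ∩ U ⊆ postSetOf T R

/-- The flow equations for `(C, C', x)`. -/
def FlowEq (T : Finset (PTrans Q)) (C C' : Multiset Q) (x : PTrans Q → ℕ) : Prop :=
  ∀ q : Q, (C'.count q : ℤ) =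
    (C.count q : ℤ) + ∑ t ∈ T, (x t : ℤ) * (((post t).count q : ℤ) - ((pre t).count q : ℤ))

/-- The support of `x` within `T`. -/
def suppIn (T : Finset (PTrans Q)) (x : PTrans Q → ℕ) : Finset (PTrans Q) :=
  T.filter fun t => x t ≠ 0

/-- Potential reachability `C ⇒ₓ C'` (flow equations plus trap and siphon constraints,
with `U = supp x`). -/
def PotReach (T : Finset (PTrans Q)) (C C' : Multiset Q) (x : PTrans Q → ℕ) : Prop :=
  FlowEq T C C' x ∧
  (∀ R : Finset Q, IsTrap T (suppIn T x) R → (∀ q ∈ R, q ∉ C') →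
    preSetOf T R ∩ suppIn T x = ∅) ∧
  (∀ R : Finset Q, IsSiphon T (suppIn T x) R → (∀ q ∈ R, q ∉ C) →
    postSetOf T R ∩ suppIn T x = ∅)

/-- StrongConsensus: all terminal configurations potentially reachable from an initial
configuration are consensus configurations with one common output. -/
def StrongConsensus (P : Protocol Q A) : Prop :=
  ∀ X : Multiset A, 2 ≤ Multiset.card X → ∃ b : Bool,
    ∀ (C' : Multiset Q) (x : PTrans Q → ℕ),
      PotReach P.T (init P X) C' x → Terminal P.T C' → Consensus P.out C' b

/-- `C` is `U`-dead: no transition of `U` can change `C`. -/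
def UDeadConf (U : Finset (PTrans Q)) (C : Multiset Q) : Prop :=
  ∀ t ∈ U, ∀ C' : Multiset Q, StepBy t C C' → C' = C

/-- The protocol with transitions `T` is `U`-dead: from every `U`-dead configuration,
every reachable configuration is `U`-dead. -/
def UDead (T U : Finset (PTrans Q)) : Prop :=
  ∀ C₀ : Multiset Q, 2 ≤ Multiset.card C₀ → UDeadConf U C₀ →
    ∀ C : Multiset Q, Reach T C₀ C → UDeadConf U C

/-! ### Auxiliary development -/

section Aux

open Classical

variable {Q : Type*} [Fintype Q] [DecidableEq Q]
variable {A : Type*} [Fintype A]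

lemma card_pre (t : PTrans Q) : Multiset.card (pre t) = 2 := by simp [pre]

lemma card_post (t : PTrans Q) : Multiset.card (post t) = 2 := by simp [post]

lemma stepBy_card {t : PTrans Q} {C C' : Multiset Q} (h : StepBy t C C') :
    Multiset.card C' = Multiset.card C := by
  have h2 : Multiset.card (pre t) ≤ Multiset.card C := Multiset.card_le_card h.1
  rw [h.2, Multiset.card_add, Multiset.card_sub h.1, card_pre, card_post]
  rw [card_pre] at h2; omega

lemma step_card {T : Finset (PTrans Q)} {C C' : Multiset Q} (h : Step T C C') :
    Multiset.card C' = Multiset.card C := by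
  obtain ⟨t, _, ht⟩ := h; exact stepBy_card ht

lemma reach_card {T : Finset (PTrans Q)} {C C' : Multiset Q} (h : Reach T C C') :
    Multiset.card C' = Multiset.card C := by
  induction h with
  | refl => rfl
  | tail _ hstep ih => rw [step_card hstep, ih]

lemma silent_stepBy_eq {t : PTrans Q} {C C' : Multiset Q} (hs : SilentT t)
    (h : StepBy t C C') : C' = C := by
  rw [h.2, ← hs, tsub_add_cancel_of_le h.1]

lemma stepBy_silent_self {t : PTrans Q} {C : Multiset Q} (hs : SilentT t)
    (hle : pre t ≤ C) : StepBy t C C :=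
  ⟨hle, by rw [← hs, tsub_add_cancel_of_le hle]⟩

lemma step_terminal_eq {T : Finset (PTrans Q)} {D D' : Multiset Q}
    (hT : Terminal T D) (h : Step T D D') : D' = D := by
  obtain ⟨t, htT, hs⟩ := h
  exact silent_stepBy_eq (hT t htT hs.1) hs

lemma not_silent_ne {t : PTrans Q} {C : Multiset Q} (hle : pre t ≤ C)
    (hns : ¬ SilentT t) : C - pre t + post t ≠ C := by
  intro h
  apply hns
  refine Multiset.ext.mpr fun q => ?_
  have hc := congrArg (Multiset.count q) h
  rw [Multiset.count_add, Multiset.count_sub] at hc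
  have hcount := Multiset.count_le_of_le q hle
  omega

lemma exists_enabled (P : Protocol Q A) {C : Multiset Q} (h2 : 2 ≤ Multiset.card C) :
    ∃ t ∈ P.T, pre t ≤ C := by
  obtain ⟨p, hp⟩ := Multiset.card_pos_iff_exists_mem.mp (show 0 < Multiset.card C by omega)
  obtain ⟨C1, rfl⟩ := Multiset.exists_cons_of_mem hp
  rw [Multiset.card_cons] at h2
  obtain ⟨q, hq⟩ := Multiset.card_pos_iff_exists_mem.mp (show 0 < Multiset.card C1 by omega)
  obtain ⟨C2, rfl⟩ := Multiset.exists_cons_of_mem hq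
  obtain ⟨p', q', ht⟩ := P.total p q
  refine ⟨(p, q, p', q'), ht, ?_⟩
  show ({p, q} : Multiset Q) ≤ _
  rw [Multiset.insert_eq_cons]
  exact Multiset.cons_le_cons p (Multiset.cons_le_cons q (Multiset.zero_le _))

lemma steps_reach {T : Finset (PTrans Q)} {e : ℕ → Multiset Q}
    (hs : ∀ i, Step T (e i) (e (i + 1))) {i j : ℕ} (hij : i ≤ j) :
    Reach T (e i) (e j) := by
  induction hij with
  | refl => exact Relation.ReflTransGen.refl
  | step _ ih => exact Relation.ReflTransGen.tail ih (hs _)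

lemma infinite_exists_ge {S : Set ℕ} (h : S.Infinite) (m : ℕ) : ∃ j ∈ S, m ≤ j := by
  by_contra hc
  push_neg at hc
  exact h (Set.Finite.subset (Set.finite_Iio m) fun j hj => hc j hj)

lemma fair_step_infinite {T : Finset (PTrans Q)} {e : ℕ → Multiset Q} {D D' : Multiset Q}
    (hf : Fair T e) (hDD' : Step T D D') (h : {i | e i = D}.Infinite) :
    {i | e i = D'}.Infinite := by
  have h2 := hf D D' hDD' h
  have h3 : ((· + 1) '' {j | e j = D ∧ e (j + 1) = D'}).Infinite :=
    h2.image (Function.Injective.injOn (add_left_injective 1))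
  exact h3.mono (by rintro _ ⟨j, ⟨_, hj2⟩, rfl⟩; exact hj2)

lemma fair_reach_infinite {T : Finset (PTrans Q)} {e : ℕ → Multiset Q} {D D' : Multiset Q}
    (hf : Fair T e) (hr : Reach T D D') (h : {i | e i = D}.Infinite) :
    {i | e i = D'}.Infinite := by
  induction hr with
  | refl => exact h
  | tail _ hstep ih => exact fair_step_infinite hf hstep ih

lemma terminal_of_fair_limit {T : Finset (PTrans Q)} {e : ℕ → Multiset Q} {m : ℕ}
    (hf : Fair T e) (hm : ∀ i ≥ m, e i = e m) : Terminal T (e m) := by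
  intro t htT hpre
  by_contra hns
  have hne := not_silent_ne hpre hns
  have hstep : Step T (e m) (e m - pre t + post t) := ⟨t, htT, hpre, rfl⟩
  have hinf : {i | e i = e m}.Infinite :=
    (Set.Ici_infinite m).mono (fun i hi => hm i hi)
  have h2 := hf _ _ hstep hinf
  obtain ⟨j, hj, hjm⟩ := infinite_exists_ge h2 m
  obtain ⟨hj1, hj2⟩ := hj
  have h3 : e (j + 1) = e m := hm (j + 1) (by omega)
  rw [h3] at hj2
  exact hne hj2.symm

lemma silent_of_termination (P : Protocol Q A) (hT : Termination P) :
    IsSilentProtocol P := by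
  intro e he hfair
  obtain ⟨h2, hsteps⟩ := he
  have hcard : ∀ i, Multiset.card (e i) = Multiset.card (e 0) := by
    intro i; induction i with
    | zero => rfl
    | succ n ih => rw [step_card (hsteps n), ih]
  let f : ℕ → Sym Q (Multiset.card (e 0)) := fun i => ⟨e i, hcard i⟩
  obtain ⟨σ, hσ⟩ := Finite.exists_infinite_fiber f
  have hD : {i | e i = σ.1}.Infinite := by
    have hpre : (f ⁻¹' {σ}).Infinite := by
      exact Set.infinite_coe_iff.mp hσ
    refine hpre.mono ?_
    intro i hi
    have hfi : f i = σ := hi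
    exact congrArg Subtype.val hfi
  obtain ⟨i0, hi0⟩ := hD.nonempty
  have hDcard : 2 ≤ Multiset.card σ.1 := by
    rw [← hi0, hcard i0]; exact h2
  obtain ⟨D', hreach, hterm⟩ := hT σ.1 hDcard
  have hD'inf : {i | e i = D'}.Infinite := fair_reach_infinite hfair hreach hD
  obtain ⟨i1, hi1⟩ := hD'inf.nonempty
  refine ⟨i1, ?_⟩
  have hall : ∀ j ≥ i1, e j = D' := by
    intro j hj
    induction j, hj using Nat.le_induction with
    | base => exact hi1
    | succ n hn ih =>
      have hst := hsteps n
      rw [ih] at hst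
      exact step_terminal_eq hterm hst
  intro i hi
  rw [hall i hi, hall i1 (le_refl i1)]

/-! ### Small list lemmas -/

lemma chain_snoc {α : Type*} {r : α → α → Prop} {b : α} :
    ∀ {l : List α} {a : α}, List.Chain r a l →
      r ((a :: l).getLast (List.cons_ne_nil _ _)) b → List.Chain r a (l ++ [b])
  | [], a, _, h2 => by
      simp only [List.getLast_singleton] at h2
      exact List.Chain.cons h2 List.Chain.nil
  | c :: l', a, h, h2 => by
      unfold List.Chain at h
      rw [List.isChain_cons_cons] at h
      rw [List.getLast_cons_cons] at h2
      exact List.Chain.cons h.1 (chain_snoc h.2 h2)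

lemma getD_cons_last {α : Type*} (l : List α) (a d : α) :
    (a :: l).getD l.length d = (a :: l).getLast (List.cons_ne_nil _ _) := by
  induction l generalizing a with
  | nil => rfl
  | cons c l ih =>
    rw [List.getLast_cons_cons]
    show (a :: c :: l).getD (l.length + 1) d = _
    rw [List.getD_cons_succ]
    exact ih c

lemma getD_append_left' {α : Type*} (l l2 : List α) (d : α) :
    ∀ j < l.length, (l ++ l2).getD j d = l.getD j d := by
  induction l with
  | nil => intro j hj; simp at hj
  | cons c l ih =>
    intro j hj
    cases j with
    | zero => rfl
    | succ j =>
      show (l ++ l2).getD j d = (c :: l).getD (j+1) d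
      rw [List.getD_cons_succ]
      exact ih j (by simpa using hj)

lemma getD_snoc_length {α : Type*} (l : List α) (b d : α) :
    (l ++ [b]).getD l.length d = b := by
  induction l with
  | nil => rfl
  | cons c l ih =>
    show (c :: (l ++ [b])).getD (l.length + 1) d = b
    rw [List.getD_cons_succ]
    exact ih

lemma chain_step_getD {α : Type*} {r : α → α → Prop} {d : α} :
    ∀ {l : List α} {a : α}, List.Chain r a l → ∀ i < l.length,
      r ((a :: l).getD i d) ((a :: l).getD (i + 1) d)
  | [], a, _, i, h => absurd h (by simp)
  | b :: l', a, h, 0, _ => by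
      unfold List.Chain at h
      rw [List.isChain_cons_cons] at h
      simpa using h.1
  | b :: l', a, h, (i+1), hi => by
      unfold List.Chain at h
      rw [List.isChain_cons_cons] at h
      have := chain_step_getD (d := d) h.2 i (by simpa using hi)
      simpa [List.getD_cons_succ] using this

/-! ### Execution reaching a terminal configuration and staying there -/

lemma exists_exec_to_terminal (P : Protocol Q A) {C0 D : Multiset Q}
    (h2 : 2 ≤ Multiset.card C0) (hr : Reach P.T C0 D) (ht : Terminal P.T D) :
    ∃ e : ℕ → Multiset Q, e 0 = C0 ∧ (∀ i, Step P.T (e i) (e (i + 1))) ∧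
      Fair P.T e ∧ ∃ m, ∀ i ≥ m, e i = D := by
  obtain ⟨l, hc, hl⟩ := List.exists_isChain_cons_of_relationReflTransGen hr
  set e : ℕ → Multiset Q := fun i => (C0 :: l).getD i D with he
  have hDel : ∀ i, l.length ≤ i → e i = D := by
    intro i hi
    show (C0 :: l).getD i D = D
    rcases eq_or_lt_of_le hi with h | h
    · rw [← h, getD_cons_last, hl]
    · exact List.getD_eq_default _ _ (by simp; omega)
  have hcardD : 2 ≤ Multiset.card D := by rw [reach_card hr]; exact h2
  obtain ⟨t0, ht0T, ht0le⟩ := exists_enabled P hcardD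
  have hstepD : Step P.T D D := ⟨t0, ht0T, stepBy_silent_self (ht t0 ht0T ht0le) ht0le⟩
  have hsteps : ∀ i, Step P.T (e i) (e (i + 1)) := by
    intro i
    by_cases hi : i < l.length
    · exact chain_step_getD hc i hi
    · rw [hDel i (by omega), hDel (i + 1) (by omega)]
      exact hstepD
  refine ⟨e, rfl, hsteps, ?_, ⟨l.length, hDel⟩⟩
  intro C1 C2 hstep hinf
  obtain ⟨j, hj, hjge⟩ := infinite_exists_ge hinf l.length
  have hC1 : C1 = D := by rw [← hj]; exact hDel j hjge
  rw [hC1] at hstep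
  have hC2 : C2 = D := step_terminal_eq ht hstep
  rw [hC1, hC2]
  exact (Set.Ici_infinite l.length).mono fun i hi => ⟨hDel i hi, hDel (i + 1) (by
    exact le_trans hi (Nat.le_succ i))⟩

/-! ### The scheduler machine producing a fair execution from any configuration -/

noncomputable section Machine

variable (P : Protocol Q A) (s : ℕ → Multiset Q × PTrans Q)

/-- List of configurations realizing a reach, with the result of a final transition appended. -/
def stageList (X σ : Multiset Q) (h : Reach P.T X σ) (t : PTrans Q) : List (Multiset Q) :=
  Classical.choose (List.exists_isChain_cons_of_relationReflTransGen h) ++ [σ - pre t + post t]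

lemma stageList_ne_nil (X σ : Multiset Q) (h : Reach P.T X σ) (t : PTrans Q) :
    stageList P X σ h t ≠ [] := by simp [stageList]

lemma stageList_chain {X σ : Multiset Q} (h : Reach P.T X σ) {t : PTrans Q}
    (htT : t ∈ P.T) (hpre : pre t ≤ σ) :
    List.Chain (Step P.T) X (stageList P X σ h t) := by
  obtain ⟨hch, hlast⟩ := Classical.choose_spec (List.exists_isChain_cons_of_relationReflTransGen h)
  exact chain_snoc hch (by rw [hlast]; exact ⟨t, htT, hpre, rfl⟩)

lemma stageList_getD {X σ : Multiset Q} (h : Reach P.T X σ) (t : PTrans Q) :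
    (X :: stageList P X σ h t).getD ((stageList P X σ h t).length - 1) 0 = σ ∧
    (X :: stageList P X σ h t).getD (stageList P X σ h t).length 0 = σ - pre t + post t := by
  obtain ⟨hch, hlast⟩ := Classical.choose_spec (List.exists_isChain_cons_of_relationReflTransGen h)
  set l := Classical.choose (List.exists_isChain_cons_of_relationReflTransGen h) with hldef
  have hM : stageList P X σ h t = l ++ [σ - pre t + post t] := rfl
  have hsplit : X :: stageList P X σ h t = (X :: l) ++ [σ - pre t + post t] := by
    rw [hM]; rfl
  have hlen : (stageList P X σ h t).length = l.length + 1 := by rw [hM]; simp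
  constructor
  · rw [hsplit, hlen]
    simp only [Nat.add_sub_cancel]
    rw [getD_append_left' _ _ _ l.length (by simp)]
    rw [getD_cons_last, hlast]
  · rw [hsplit, hlen]
    have : l.length + 1 = (X :: l).length := by simp
    rw [this, getD_snoc_length]

/-- An arbitrary successor configuration. -/
def fallback (X : Multiset Q) : Multiset Q :=
  if h2 : ∃ t' ∈ P.T, pre t' ≤ X then
    X - pre (Classical.choose h2) + post (Classical.choose h2)
  else X

lemma fallback_step {X : Multiset Q} (hX : 2 ≤ Multiset.card X) :
    Step P.T X (fallback P X) := by
  have h2 : ∃ t' ∈ P.T, pre t' ≤ X := exists_enabled P hX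
  unfold fallback
  rw [dif_pos h2]
  obtain ⟨h1', h2'⟩ := Classical.choose_spec h2
  exact ⟨_, h1', h2', rfl⟩

/-- One step of the scheduler machine. State: (stage counter, pending configs, current config). -/
def fstep : ℕ × List (Multiset Q) × Multiset Q → ℕ × List (Multiset Q) × Multiset Q
  | (k, Y :: L, _) => (k, L, Y)
  | (k, [], X) =>
    if h : (s k).2 ∈ P.T ∧ pre (s k).2 ≤ (s k).1 ∧ Reach P.T X (s k).1 then
      (k + 1, (stageList P X (s k).1 h.2.2 (s k).2).tail,
        (stageList P X (s k).1 h.2.2 (s k).2).headI)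
    else (k + 1, [], fallback P X)

lemma fstep_cons (k : ℕ) (Y : Multiset Q) (L : List (Multiset Q)) (X : Multiset Q) :
    fstep P s (k, Y :: L, X) = (k, L, Y) := rfl

lemma fstep_nil (k : ℕ) (X : Multiset Q) :
    fstep P s (k, [], X) =
      if h : (s k).2 ∈ P.T ∧ pre (s k).2 ≤ (s k).1 ∧ Reach P.T X (s k).1 then
        (k + 1, (stageList P X (s k).1 h.2.2 (s k).2).tail,
          (stageList P X (s k).1 h.2.2 (s k).2).headI)
      else (k + 1, [], fallback P X) := rfl

/-- The machine state at time `i`. -/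
def mstate (C0 : Multiset Q) : ℕ → ℕ × List (Multiset Q) × Multiset Q
  | 0 => (0, [], C0)
  | i + 1 => fstep P s (mstate C0 i)

variable {P s}

lemma fstep_spec {st : ℕ × List (Multiset Q) × Multiset Q}
    (hchain : List.Chain (Step P.T) st.2.2 st.2.1) (hcard : 2 ≤ Multiset.card st.2.2) :
    List.Chain (Step P.T) (fstep P s st).2.2 (fstep P s st).2.1 ∧
      Step P.T st.2.2 (fstep P s st).2.2 := by
  rcases st with ⟨k, L, X⟩
  cases L with
  | cons Y L' =>
    rw [fstep_cons]
    unfold List.Chain at hchain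
    rw [List.isChain_cons_cons] at hchain
    exact ⟨hchain.2, hchain.1⟩
  | nil =>
    rw [fstep_nil]
    split
    case isTrue h =>
      have hch : List.Chain (Step P.T) X (stageList P X (s k).1 h.2.2 (s k).2) :=
        stageList_chain P h.2.2 h.1 h.2.1
      obtain ⟨m0, M', hM⟩ :=
        List.exists_cons_of_ne_nil (stageList_ne_nil P X (s k).1 h.2.2 (s k).2)
      rw [hM] at hch
      unfold List.Chain at hch
      rw [List.isChain_cons_cons] at hch
      constructor
      · simp only [hM, List.headI, List.tail]
        exact hch.2
      · simp only [hM, List.headI]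
        exact hch.1
    case isFalse h =>
      exact ⟨List.Chain.nil, fallback_step P hcard⟩

lemma mstate_inv {C0 : Multiset Q} (hC0 : 2 ≤ Multiset.card C0) (i : ℕ) :
    List.Chain (Step P.T) (mstate P s C0 i).2.2 (mstate P s C0 i).2.1 ∧
      2 ≤ Multiset.card (mstate P s C0 i).2.2 := by
  induction i with
  | zero => exact ⟨List.Chain.nil, hC0⟩
  | succ n ih =>
    obtain ⟨hch, hst⟩ := fstep_spec (s := s) ih.1 ih.2
    refine ⟨hch, ?_⟩
    show 2 ≤ Multiset.card (fstep P s (mstate P s C0 n)).2.2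
    rw [step_card hst]; exact ih.2

lemma conf_step {C0 : Multiset Q} (hC0 : 2 ≤ Multiset.card C0) (i : ℕ) :
    Step P.T (mstate P s C0 i).2.2 (mstate P s C0 (i + 1)).2.2 := by
  have h := mstate_inv (P := P) (s := s) hC0 i
  exact (fstep_spec (s := s) h.1 h.2).2

lemma cnt_le (C0 : Multiset Q) (i : ℕ) : (mstate P s C0 i).1 ≤ i := by
  induction i with
  | zero => exact le_refl 0
  | succ n ih =>
    rcases hmi : mstate P s C0 n with ⟨k, L, X⟩
    rw [hmi] at ih
    show (fstep P s (mstate P s C0 n)).1 ≤ n + 1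
    rw [hmi]
    cases L with
    | cons Y L' => rw [fstep_cons]; exact le_trans ih (Nat.le_succ n)
    | nil =>
      rw [fstep_nil]
      split <;> simpa using by omega

lemma drain (C0 : Multiset Q) :
    ∀ (m i : ℕ), (mstate P s C0 i).2.1.length = m →
      ∃ j, i ≤ j ∧ (mstate P s C0 j).2.1 = [] ∧ (mstate P s C0 j).1 = (mstate P s C0 i).1 := by
  intro m
  induction m with
  | zero =>
    intro i hi
    exact ⟨i, le_refl i, List.length_eq_zero_iff.mp hi, rfl⟩
  | succ m ih =>
    intro i hi
    rcases hmi : mstate P s C0 i with ⟨k, L, X⟩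
    rw [hmi] at hi
    cases L with
    | nil => simp at hi
    | cons Y L' =>
      have h1 : mstate P s C0 (i + 1) = (k, L', Y) := by
        show fstep P s (mstate P s C0 i) = _
        rw [hmi, fstep_cons]
      obtain ⟨j, hj1, hj2, hj3⟩ := ih (i + 1) (by rw [h1]; simpa using hi)
      refine ⟨j, by omega, hj2, ?_⟩
      rw [hj3, h1]

lemma fstep_fst_nil (k : ℕ) (X : Multiset Q) : (fstep P s (k, [], X)).1 = k + 1 := by
  rw [fstep_nil]; split <;> rfl

lemma fstep_fst_nil' {st : ℕ × List (Multiset Q) × Multiset Q} (h : st.2.1 = []) :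
    (fstep P s st).1 = st.1 + 1 := by
  rcases st with ⟨k, L, X⟩
  simp only at h
  subst h
  exact fstep_fst_nil k X

lemma stage_exists (C0 : Multiset Q) (k : ℕ) :
    ∃ i, (mstate P s C0 i).2.1 = [] ∧ (mstate P s C0 i).1 = k := by
  induction k with
  | zero => exact ⟨0, rfl, rfl⟩
  | succ k ih =>
    obtain ⟨i, hnil, hcnt⟩ := ih
    have h1 : (mstate P s C0 (i + 1)).1 = k + 1 := by
      show (fstep P s (mstate P s C0 i)).1 = k + 1
      rw [fstep_fst_nil' hnil, hcnt]
    obtain ⟨j, hj1, hj2, hj3⟩ := drain (P := P) (s := s) C0 (mstate P s C0 (i + 1)).2.1.length (i + 1) rfl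
    exact ⟨j, hj2, by rw [hj3, h1]⟩

lemma seg (C0 : Multiset Q) :
    ∀ (j i : ℕ), j ≤ (mstate P s C0 i).2.1.length →
      (mstate P s C0 (i + j)).2.2 = ((mstate P s C0 i).2.2 :: (mstate P s C0 i).2.1).getD j 0 := by
  intro j
  induction j with
  | zero => intro i _; rfl
  | succ j ih =>
    intro i hj
    rcases hmi : mstate P s C0 i with ⟨k, L, X⟩
    rw [hmi] at hj
    cases L with
    | nil => simp at hj
    | cons Y L' =>
      have h1 : mstate P s C0 (i + 1) = (k, L', Y) := by
        show fstep P s (mstate P s C0 i) = _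
        rw [hmi, fstep_cons]
      have h2 : i + (j + 1) = (i + 1) + j := by omega
      rw [h2, ih (i + 1) (by rw [h1]; simpa using hj), h1]
      rfl

lemma machine_fair {C0 : Multiset Q} (hC0 : 2 ≤ Multiset.card C0)
    (hs : ∀ (D : Multiset Q) (t : PTrans Q), Multiset.card D = Multiset.card C0 →
      ∀ k₀ : ℕ, ∃ k ≥ k₀, s k = (D, t)) :
    Fair P.T (fun i => (mstate P s C0 i).2.2) := by
  intro D D' hstep hinf
  by_contra hfin
  rw [Set.not_infinite] at hfin
  obtain ⟨N, hN⟩ := hfin.bddAbove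
  obtain ⟨t, htT, hpre, hD'⟩ : ∃ t ∈ P.T, pre t ≤ D ∧ D' = D - pre t + post t := by
    obtain ⟨t, h1, h2, h3⟩ := hstep; exact ⟨t, h1, h2, h3⟩
  have ecard : ∀ i, Multiset.card (mstate P s C0 i).2.2 = Multiset.card C0 := by
    intro i; induction i with
    | zero => rfl
    | succ n ih => rw [step_card (conf_step (P := P) (s := s) hC0 n), ih]
  obtain ⟨i0, hi0⟩ := hinf.nonempty
  have hcardD : Multiset.card D = Multiset.card C0 := by
    rw [← show (mstate P s C0 i0).2.2 = D from hi0]; exact ecard i0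
  obtain ⟨k, hkN, hsk⟩ := hs D t hcardD (N + 1)
  obtain ⟨i, hnil, hcnt⟩ := stage_exists (P := P) (s := s) C0 k
  have hik : k ≤ i := hcnt ▸ cnt_le (P := P) (s := s) C0 i
  set X := (mstate P s C0 i).2.2 with hXdef
  have hmi : mstate P s C0 i = (k, [], X) := by
    rw [← hcnt, ← hnil]
  have hXconf : (mstate P s C0 i).2.2 = X := rfl
  have hreach : Reach P.T X D := by
    obtain ⟨j, hjD, hij⟩ := infinite_exists_ge hinf i
    have hr : Reach P.T ((mstate P s C0 i).2.2) ((mstate P s C0 j).2.2) :=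
      steps_reach (e := fun i => (mstate P s C0 i).2.2) (conf_step (P := P) (s := s) hC0) hij
    rw [hXconf] at hr
    rwa [show (mstate P s C0 j).2.2 = D from hjD] at hr
  have hcond : t ∈ P.T ∧ pre t ≤ D ∧ Reach P.T X D := ⟨htT, hpre, hreach⟩
  have hstep1 : mstate P s C0 (i + 1) = (k + 1, (stageList P X D hcond.2.2 t).tail,
      (stageList P X D hcond.2.2 t).headI) := by
    show fstep P s (mstate P s C0 i) = _
    rw [hmi, fstep_nil]
    simp only [hsk]
    rw [dif_pos hcond]
  set M := stageList P X D hcond.2.2 t with hMdef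
  have hMne : M ≠ [] := stageList_ne_nil P X D hcond.2.2 t
  have hMlen : 1 ≤ M.length := List.length_pos_iff.mpr hMne
  obtain ⟨m0, M', hM⟩ := List.exists_cons_of_ne_nil hMne
  have hF : ∀ j ≤ M.length, (mstate P s C0 (i + j)).2.2 = (X :: M).getD j 0 := by
    intro j hj
    cases j with
    | zero => exact hXconf
    | succ j' =>
      have h3 : i + (j' + 1) = (i + 1) + j' := by omega
      have hjlen : j' ≤ (mstate P s C0 (i + 1)).2.1.length := by
        rw [hstep1]
        simp only
        rw [hM]
        simp only [List.tail]
        rw [hM] at hj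
        simpa using hj
      rw [h3, seg (P := P) (s := s) C0 j' (i + 1) hjlen, hstep1]
      simp only
      rw [hM]
      simp only [List.headI, List.tail]
      rfl
  obtain ⟨hgd1, hgd2⟩ := stageList_getD (P := P) hcond.2.2 t
  have hj1 : (mstate P s C0 (i + (M.length - 1))).2.2 = D := by
    rw [hF (M.length - 1) (by omega)]
    exact hgd1
  have hj2 : (mstate P s C0 (i + (M.length - 1) + 1)).2.2 = D' := by
    have h4 : i + (M.length - 1) + 1 = i + M.length := by omega
    rw [h4, hF M.length (le_refl _), hgd2, hD']
  have hmem : i + (M.length - 1) ∈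
      {j | (fun i => (mstate P s C0 i).2.2) j = D ∧
        (fun i => (mstate P s C0 i).2.2) (j + 1) = D'} := ⟨hj1, hj2⟩
  have := hN hmem
  omega

end Machine

lemma exists_fair_exec [Nonempty Q] (P : Protocol Q A) (C0 : Multiset Q)
    (hC0 : 2 ≤ Multiset.card C0) :
    ∃ e : ℕ → Multiset Q, e 0 = C0 ∧ IsExec P.T e ∧ Fair P.T e := by
  have hne : Nonempty (Sym Q (Multiset.card C0) × PTrans Q) := by
    refine ⟨⟨⟨Multiset.replicate (Multiset.card C0) (Classical.arbitrary Q), by simp⟩,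
      Classical.arbitrary _⟩⟩
  set m := Fintype.card (Sym Q (Multiset.card C0) × PTrans Q) with hmdef
  have hm : 0 < m := Fintype.card_pos
  set eqv := Fintype.equivFin (Sym Q (Multiset.card C0) × PTrans Q) with heqv
  set sfun : ℕ → Multiset Q × PTrans Q := fun k =>
    ((eqv.symm ⟨k % m, Nat.mod_lt _ hm⟩).1.1, (eqv.symm ⟨k % m, Nat.mod_lt _ hm⟩).2)
    with hsfun
  have hs : ∀ (D : Multiset Q) (t : PTrans Q), Multiset.card D = Multiset.card C0 →
      ∀ k₀ : ℕ, ∃ k ≥ k₀, sfun k = (D, t) := by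
    intro D t hD k₀
    refine ⟨m * k₀ + (eqv (⟨D, hD⟩, t)).1, ?_, ?_⟩
    · calc k₀ ≤ m * k₀ := Nat.le_mul_of_pos_left _ hm
        _ ≤ _ := Nat.le_add_right _ _
    · have hmod : (m * k₀ + ((eqv (⟨D, hD⟩, t)).1 : ℕ)) % m = ((eqv (⟨D, hD⟩, t)).1 : ℕ) := by
        rw [Nat.mul_add_mod]
        exact Nat.mod_eq_of_lt (eqv (⟨D, hD⟩, t)).isLt
      rw [hsfun]
      simp only [hmod, Fin.eta, Equiv.symm_apply_apply]
  refine ⟨fun i => (mstate P sfun C0 i).2.2, rfl, ⟨hC0, conf_step hC0⟩, machine_fair hC0 hs⟩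

lemma termination_of_silent [Nonempty Q] (P : Protocol Q A) (hSil : IsSilentProtocol P) :
    Termination P := by
  intro C hC
  obtain ⟨e, he0, hex, hfair⟩ := exists_fair_exec P C hC
  obtain ⟨m, hm⟩ := hSil e hex hfair
  refine ⟨e m, ?_, terminal_of_fair_limit hfair hm⟩
  rw [← he0]
  exact steps_reach hex.2 (Nat.zero_le m)

lemma nst_of_ws (P : Protocol Q A) (hWS : WellSpecified P) : NoSplitTerminal P := by
  intro X hX
  obtain ⟨b, hb⟩ := hWS X hX
  refine ⟨b, ?_⟩
  intro C' hreach hterm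
  have h2 : 2 ≤ Multiset.card (init P X) := by
    rw [init, Multiset.card_map]; exact hX
  obtain ⟨e, he0, hsteps, hfair, m, hm⟩ := exists_exec_to_terminal P h2 hreach hterm
  obtain ⟨n0, hn0⟩ := hb e he0 hsteps hfair
  intro q hq
  have he : e (max n0 m) = C' := hm _ (le_max_right _ _)
  exact hn0 _ (le_max_left _ _) q (by rw [he]; exact hq)

lemma ws_of_nst (P : Protocol Q A) (hSil : IsSilentProtocol P) (hNST : NoSplitTerminal P) :
    WellSpecified P := by
  intro X hX
  obtain ⟨b, hb⟩ := hNST X hX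
  refine ⟨b, ?_⟩
  intro e he0 hsteps hfair
  have hex : IsExec P.T e := by
    refine ⟨?_, hsteps⟩
    rw [he0, init, Multiset.card_map]; exact hX
  obtain ⟨m, hm⟩ := hSil e hex hfair
  have hterm := terminal_of_fair_limit hfair hm
  have hreach : Reach P.T (init P X) (e m) := by
    rw [← he0]; exact steps_reach hsteps (Nat.zero_le m)
  have hcons := hb (e m) hreach hterm
  exact ⟨m, fun i hi => by rw [Consensus] at hcons ⊢; rw [hm i hi]; exact hcons⟩

end Aux

end PopProt
open PopProt in
/-- Proposition: a population protocol is well-specified and silent iff it satisfies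
Termination and NoSplitTerminal; (a) it is silent iff it satisfies Termination, and
(b) if it is silent, it is well-specified iff it satisfies NoSplitTerminal. -/
theorem silent_wellSpecified_iff_termination_noSplitTerminal
    {Q A : Type*} [Fintype Q] [DecidableEq Q] [Nonempty Q] [Fintype A] [Nonempty A]
    (P : Protocol Q A) :
    ((IsSilentProtocol P ∧ WellSpecified P) ↔ (Termination P ∧ NoSplitTerminal P)) ∧
    (IsSilentProtocol P ↔ Termination P) ∧
    (IsSilentProtocol P → (WellSpecified P ↔ NoSplitTerminal P)) := by
  have hb : IsSilentProtocol P ↔ Termination P :=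
    ⟨termination_of_silent P, silent_of_termination P⟩
  have hc : IsSilentProtocol P → (WellSpecified P ↔ NoSplitTerminal P) :=
    fun hSil => ⟨nst_of_ws P, ws_of_nst P hSil⟩
  refine ⟨?_, hb, hc⟩
  constructor
  · rintro ⟨h1, h2⟩
    exact ⟨hb.mp h1, (hc h1).mp h2⟩
  · rintro ⟨h1, h2⟩
    have hSil := hb.mpr h1
    exact ⟨hSil, (hc hSil).mpr h2⟩
end

section
/- Let P = (Q, T, Σ, I, O) be a population protocol, let U ⊆ T and let S = T ∖ U. Then P is not U-dead if and only if there exist s ∈ S and a non-silent u ∈ U such that for every non-silent u' ∈ U, pre(u') is not ≤ pre(s) + (pre(u) ∸ post(s)) (where ∸ is truncated multiset difference). -/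
open PopProt in
private lemma udeadconf_iff {Q : Type*} [Fintype Q] [DecidableEq Q]
    (U : Finset (PTrans Q)) (C : Multiset Q) :
    UDeadConf U C ↔ ∀ t ∈ U, ¬ SilentT t → ¬ pre t ≤ C := by
  constructor
  · intro h t ht hns hle
    have h1 := h t ht (C - pre t + post t) ⟨hle, rfl⟩
    have h2 : C - pre t + pre t = C := tsub_add_cancel_of_le hle
    exact hns (add_left_cancel (h1.trans h2.symm)).symm
  · intro h t ht C' hst
    by_cases hs : SilentT t
    · rw [hst.2, ← hs]
      exact tsub_add_cancel_of_le hst.1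
    · exact absurd hst.1 (h t ht hs)

open PopProt in
/-- Lemma: the protocol is not `U`-dead iff there are `s ∈ T ∖ U` and a non-silent
`u ∈ U` such that `pre u' ≰ pre s + (pre u ∸ post s)` for every non-silent `u' ∈ U`. -/
theorem not_udead_characterization
    {Q A : Type*} [Fintype Q] [DecidableEq Q] [Nonempty Q] [Fintype A] [Nonempty A]
    (P : Protocol Q A) (U : Finset (PTrans Q)) (hU : U ⊆ P.T) :
    ¬ UDead P.T U ↔
    (∃ s ∈ P.T \ U, ∃ u ∈ U, ¬ SilentT u ∧
      ∀ u' ∈ U, ¬ SilentT u' → ¬ (pre u' ≤ pre s + (pre u - post s))) := by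
  constructor
  · intro h
    unfold UDead at h
    push_neg at h
    obtain ⟨C₀, hcard, hdead, C, hreach, hnotdead⟩ := h
    have key : ∀ C, Reach P.T C₀ C → ¬ UDeadConf U C →
        ∃ D D', UDeadConf U D ∧ Step P.T D D' ∧ ¬ UDeadConf U D' := by
      intro C hr
      induction hr with
      | refl => intro hc; exact absurd hdead hc
      | @tail b c hr' hstep ih =>
        intro hc
        by_cases hb : UDeadConf U b
        · exact ⟨b, c, hb, hstep, hc⟩
        · exact ih hb
    obtain ⟨D, D', hD, ⟨s, hsT, hpre, hD'⟩, hD'nd⟩ := key C hreach hnotdead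
    have hsU : s ∉ U := by
      intro hsU
      exact hD'nd (hD s hsU D' ⟨hpre, hD'⟩ ▸ hD)
    rw [udeadconf_iff] at hD'nd
    push_neg at hD'nd
    obtain ⟨u, huU, hns, hule⟩ := hD'nd
    refine ⟨s, Finset.mem_sdiff.mpr ⟨hsT, hsU⟩, u, huU, hns, ?_⟩
    have hsub : pre s + (pre u - post s) ≤ D := by
      have h1 : pre u - post s ≤ D - pre s := by
        rw [tsub_le_iff_right]
        rw [hD'] at hule
        exact hule
      calc pre s + (pre u - post s) ≤ pre s + (D - pre s) := add_le_add le_rfl h1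
        _ = D := add_tsub_cancel_of_le hpre
    intro u' hu' hns' hle
    exact (udeadconf_iff U D).mp hD u' hu' hns' (hle.trans hsub)
  · rintro ⟨s, hs, u, hu, hns, hmin⟩ hUdead
    rw [Finset.mem_sdiff] at hs
    set C₀ : Multiset Q := pre s + (pre u - post s) with hC₀
    have hcard : 2 ≤ Multiset.card C₀ := by
      rw [hC₀, Multiset.card_add]
      have : Multiset.card (pre s) = 2 := by simp [pre]
      omega
    have hdead : UDeadConf U C₀ := (udeadconf_iff U C₀).mpr hmin
    set C : Multiset Q := C₀ - pre s + post s with hC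
    have hreach : Reach P.T C₀ C :=
      Relation.ReflTransGen.single ⟨s, hs.1, le_self_add, rfl⟩
    have hCdead := hUdead C₀ hcard hdead C hreach
    have hCeq : C = (pre u - post s) + post s := by
      rw [hC, hC₀, add_tsub_cancel_left]
    have hpu : pre u ≤ C := by rw [hCeq]; exact le_tsub_add
    have h1 := hCdead u hu (C - pre u + post u) ⟨hpu, rfl⟩
    have h2 : C - pre u + pre u = C := tsub_add_cancel_of_le hpu
    exact hns (add_left_cancel (h1.trans h2.symm)).symm
end

section
/- In a population protocol, potential reachability over-approximates reachability: for all configurations C and C', if C →* C' then C ⇒ C'; indeed, if C →w C' for a finite transition sequence w, then C ⇒ₓ C' where x(t) is the number of occurrences of t in w. -/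
/-! Formalization of population protocols (Angluin et al.), following
"Towards Efficient Verification of Population Protocols". -/

namespace PopProt

variable {Q : Type*} [Fintype Q] [DecidableEq Q]

variable {A : Type*} [Fintype A]

section Aux
variable {Q : Type*} [Fintype Q] [DecidableEq Q]

lemma seqStep_mem_T {T : Finset (PTrans Q)} :
    ∀ {w : List (PTrans Q)} {C C' : Multiset Q}, SeqStep T w C C' → ∀ t ∈ w, t ∈ T
  | [], _, _, _, t, ht => absurd ht List.not_mem_nil
  | s :: w, C, C', ⟨hs, _, _, hseq⟩, t, ht => by
      rcases List.mem_cons.1 ht with rfl | ht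
      · exact hs
      · exact seqStep_mem_T hseq t ht

lemma stepBy_count {t : PTrans Q} {C D : Multiset Q} (h : StepBy t C D) (q : Q) :
    (D.count q : ℤ) = (C.count q : ℤ) + ((post t).count q : ℤ) - ((pre t).count q : ℤ) := by
  obtain ⟨hle, rfl⟩ := h
  have hc : (pre t).count q ≤ C.count q := Multiset.count_le_of_le q hle
  rw [Multiset.count_add, Multiset.count_sub]
  push_cast [Nat.cast_sub hc]
  ring

lemma seqStep_flow {T : Finset (PTrans Q)} :
    ∀ {w : List (PTrans Q)} {C C' : Multiset Q}, SeqStep T w C C' →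
      FlowEq T C C' (fun t => w.count t)
  | [], C, C', h, q => by
      simp [SeqStep] at h
      simp [h]
  | t :: w, C, C', ⟨ht, D, hstep, hseq⟩, q => by
      have ih := seqStep_flow hseq q
      have hd := stepBy_count hstep q
      rw [ih, hd]
      have : ∀ s ∈ T, ((t :: w).count s : ℤ) * (((post s).count q : ℤ) - ((pre s).count q : ℤ))
          = (w.count s : ℤ) * (((post s).count q : ℤ) - ((pre s).count q : ℤ))
            + (if s = t then (((post s).count q : ℤ) - ((pre s).count q : ℤ)) else 0) := by
        intro s _
        rw [List.count_cons]
        rcases eq_or_ne s t with rfl | hst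
        · simp; push_cast; ring
        · have hb : (t == s) = false := by simp [Ne.symm hst]
          simp [hst, hb]
      rw [Finset.sum_congr rfl this, Finset.sum_add_distrib, Finset.sum_ite_eq' T t
        (fun s => ((post s).count q : ℤ) - ((pre s).count q : ℤ)), if_pos ht]
      ring

lemma trap_propagate {T : Finset (PTrans Q)} {R : Finset Q} :
    ∀ {w : List (PTrans Q)} {C C' : Multiset Q}, SeqStep T w C C' →
      (∀ s ∈ w, (∃ q ∈ R, q ∈ pre s) → ∃ q ∈ R, q ∈ post s) →
      ((∃ s ∈ w, ∃ q ∈ R, q ∈ post s) ∨ ∃ q ∈ R, q ∈ C) →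
      ∃ q ∈ R, q ∈ C'
  | [], C, C', h, _, hm => by
      simp [SeqStep] at h
      rcases hm with ⟨s, hs, _⟩ | hm
      · exact absurd hs List.not_mem_nil
      · exact h ▸ hm
  | t :: w, C, C', ⟨ht, D, hstep, hseq⟩, hcond, hm => by
      obtain ⟨hle, hD⟩ := hstep
      have hcond' : ∀ s ∈ w, (∃ q ∈ R, q ∈ pre s) → ∃ q ∈ R, q ∈ post s :=
        fun s hs => hcond s (List.mem_cons_of_mem t hs)
      by_cases hpost : ∃ q ∈ R, q ∈ post t
      · -- D is marked
        obtain ⟨q, hqR, hq⟩ := hpost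
        exact trap_propagate hseq hcond' (Or.inr ⟨q, hqR, hD ▸ Multiset.mem_add.2 (Or.inr hq)⟩)
      · -- head does not produce into R; hence by trap cond doesn't consume from R
        have hpre : ¬ ∃ q ∈ R, q ∈ pre t := fun h => hpost (hcond t List.mem_cons_self h)
        rcases hm with ⟨s, hs, hmark⟩ | ⟨q, hqR, hqC⟩
        · rcases List.mem_cons.1 hs with rfl | hs
          · exact absurd hmark hpost
          · exact trap_propagate hseq hcond' (Or.inl ⟨s, hs, hmark⟩)
        · -- C marked at q, q not consumed, so D marked
          have hq0 : (pre t).count q = 0 :=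
            Multiset.count_eq_zero.2 (fun h => hpre ⟨q, hqR, h⟩)
          have : q ∈ D := by
            rw [hD, ← Multiset.count_pos, Multiset.count_add, Multiset.count_sub, hq0]
            have := Multiset.count_pos.2 hqC
            omega
          exact trap_propagate hseq hcond' (Or.inr ⟨q, hqR, this⟩)

lemma siphon_propagate {T : Finset (PTrans Q)} {R : Finset Q} :
    ∀ {w : List (PTrans Q)} {C C' : Multiset Q}, SeqStep T w C C' →
      (∀ s ∈ w, (∃ q ∈ R, q ∈ post s) → ∃ q ∈ R, q ∈ pre s) →
      (∀ q ∈ R, q ∉ C) →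
      ∀ s ∈ w, ¬ ∃ q ∈ R, q ∈ pre s
  | [], _, _, _, _, _, s, hs => absurd hs List.not_mem_nil
  | t :: w, C, C', ⟨ht, D, hstep, hseq⟩, hcond, hunm, s, hs => by
      obtain ⟨hle, hD⟩ := hstep
      have hpre : ¬ ∃ q ∈ R, q ∈ pre t := by
        rintro ⟨q, hqR, hq⟩
        exact hunm q hqR (Multiset.mem_of_le hle hq)
      have hpost : ¬ ∃ q ∈ R, q ∈ post t :=
        fun h => hpre (hcond t List.mem_cons_self h)
      have hunm' : ∀ q ∈ R, q ∉ D := by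
        intro q hqR hq
        have h1 : (pre t).count q = 0 :=
          Multiset.count_eq_zero.2 (fun h => hpre ⟨q, hqR, h⟩)
        have h2 : (post t).count q = 0 :=
          Multiset.count_eq_zero.2 (fun h => hpost ⟨q, hqR, h⟩)
        have h3 : C.count q = 0 := Multiset.count_eq_zero.2 (hunm q hqR)
        have := Multiset.count_pos.2 hq
        rw [hD, Multiset.count_add, Multiset.count_sub, h1, h2, h3] at this
        omega
      rcases List.mem_cons.1 hs with rfl | hs
      · exact hpre
      · exact siphon_propagate hseq
          (fun s hs => hcond s (List.mem_cons_of_mem t hs)) hunm' s hs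

lemma mem_suppIn_count {T : Finset (PTrans Q)} {w : List (PTrans Q)} {t : PTrans Q} :
    t ∈ suppIn T (fun s => w.count s) ↔ t ∈ T ∧ t ∈ w := by
  simp [suppIn, List.count_pos_iff.symm, Nat.pos_iff_ne_zero]

lemma seqStep_potReach {T : Finset (PTrans Q)} {w : List (PTrans Q)} {C C' : Multiset Q}
    (h : SeqStep T w C C') : PotReach T C C' (fun t => w.count t) := by
  refine ⟨seqStep_flow h, ?_, ?_⟩
  · -- traps
    intro R htrap hC'
    by_contra hne
    obtain ⟨t, hmem⟩ := Finset.nonempty_iff_ne_empty.2 hne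
    rw [Finset.mem_inter] at hmem
    obtain ⟨htpre, htsupp⟩ := hmem
    obtain ⟨htT, htw⟩ := mem_suppIn_count.1 htsupp
    obtain ⟨-, hpostR⟩ := Finset.mem_filter.1 htpre
    have hcond : ∀ s ∈ w, (∃ q ∈ R, q ∈ pre s) → ∃ q ∈ R, q ∈ post s := by
      intro s hsw hpreR
      have hsT : s ∈ T := seqStep_mem_T h s hsw
      have : s ∈ postSetOf T R ∩ suppIn T (fun s => w.count s) :=
        Finset.mem_inter.2 ⟨Finset.mem_filter.2 ⟨hsT, hpreR⟩,
          mem_suppIn_count.2 ⟨hsT, hsw⟩⟩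
      obtain ⟨-, h2⟩ := Finset.mem_filter.1 (htrap this)
      exact h2
    obtain ⟨q, hqR, hq⟩ := trap_propagate h hcond (Or.inl ⟨t, htw, hpostR⟩)
    exact hC' q hqR hq
  · -- siphons
    intro R hsiph hC
    by_contra hne
    obtain ⟨t, hmem⟩ := Finset.nonempty_iff_ne_empty.2 hne
    rw [Finset.mem_inter] at hmem
    obtain ⟨htpost, htsupp⟩ := hmem
    obtain ⟨htT, htw⟩ := mem_suppIn_count.1 htsupp
    obtain ⟨-, hpreR⟩ := Finset.mem_filter.1 htpost
    have hcond : ∀ s ∈ w, (∃ q ∈ R, q ∈ post s) → ∃ q ∈ R, q ∈ pre s := by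
      intro s hsw hpostR
      have hsT : s ∈ T := seqStep_mem_T h s hsw
      have : s ∈ preSetOf T R ∩ suppIn T (fun s => w.count s) :=
        Finset.mem_inter.2 ⟨Finset.mem_filter.2 ⟨hsT, hpostR⟩,
          mem_suppIn_count.2 ⟨hsT, hsw⟩⟩
      obtain ⟨-, h2⟩ := Finset.mem_filter.1 (hsiph this)
      exact h2
    exact siphon_propagate h hcond hC t htw hpreR

lemma seqStep_append_single {T : Finset (PTrans Q)} :
    ∀ {w : List (PTrans Q)} {C B C' : Multiset Q} {t : PTrans Q},
      SeqStep T w C B → t ∈ T → StepBy t B C' → SeqStep T (w ++ [t]) C C'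
  | [], C, B, C', t, h, ht, hstep => by
      have hB : B = C := h
      subst hB
      exact ⟨ht, C', hstep, rfl⟩
  | s :: w, C, B, C', t, ⟨hs, D, hstep0, hseq⟩, ht, hstep => by
      exact ⟨hs, D, hstep0, seqStep_append_single hseq ht hstep⟩

lemma reach_exists_seqStep {T : Finset (PTrans Q)} {C C' : Multiset Q}
    (h : Reach T C C') : ∃ w : List (PTrans Q), SeqStep T w C C' := by
  induction h with
  | refl => exact ⟨[], rfl⟩
  | tail _ hstep ih =>
      obtain ⟨w, hw⟩ := ih
      obtain ⟨t, ht, hstep⟩ := hstep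
      exact ⟨w ++ [t], seqStep_append_single hw ht hstep⟩

end Aux
end PopProt

open PopProt in
/-- Potential reachability over-approximates reachability: if `C →w C'` then
`C ⇒ₓ C'` where `x t = |w|_t`, and if `C →* C'` then `C ⇒ C'`. -/
theorem potReach_overapproximates_reach
    {Q A : Type*} [Fintype Q] [DecidableEq Q] [Nonempty Q] [Fintype A] [Nonempty A]
    (P : Protocol Q A) :
    (∀ (w : List (PTrans Q)) (C C' : Multiset Q), 2 ≤ Multiset.card C →
      SeqStep P.T w C C' → PotReach P.T C C' (fun t => w.count t)) ∧
    (∀ C C' : Multiset Q, 2 ≤ Multiset.card C → Reach P.T C C' →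
      ∃ x : PTrans Q → ℕ, PotReach P.T C C' x) := by
  constructor
  · intro w C C' _ h
    exact seqStep_potReach h
  · intro C C' _ h
    obtain ⟨w, hw⟩ := reach_exists_seqStep h
    exact ⟨fun t => w.count t, seqStep_potReach hw⟩
end

section
/- For the threshold protocol P_thr: for all configurations C, C' and every x : T → ℕ, if (C, C', x) is a solution to the flow equations, then val(C) = val(C'). -/
namespace PopProt

section Threshold

variable (k : ℕ) (a : Fin k → ℤ) (c : ℤ)

/-- `vmax = max(|a₁|, …, |a_k|, |c| + 1)`. -/
def vmax : ℤ := max ((Finset.univ.sup fun i : Fin k => (a i).natAbs : ℕ) : ℤ) (|c| + 1)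

lemma vmax_pos : 0 < vmax k a c := by
  have h : (0 : ℤ) ≤ |c| := abs_nonneg c
  exact lt_max_of_lt_right (by omega)

/-- The value range `[-vmax, vmax]`. -/
abbrev Vr := ↥(Finset.Icc (-(vmax k a c)) (vmax k a c))

/-- States of the threshold protocol: a leader bit, a value and an opinion. -/
abbrev Qthr := Bool × Vr k a c × Bool

/-- `f(m, n) = max(-vmax, min(vmax, m + n))`. -/
def fthr (m n : ℤ) : ℤ := max (-(vmax k a c)) (min (vmax k a c) (m + n))

/-- `g(m, n) = (m + n) - f(m, n)`. -/
def gthr (m n : ℤ) : ℤ := m + n - fthr k a c m n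

/-- `b(m, n) = (f(m, n) < c)`. -/
def bthr (m n : ℤ) : Bool := decide (fthr k a c m n < c)

lemma fthr_mem (m n : ℤ) : fthr k a c m n ∈ Finset.Icc (-(vmax k a c)) (vmax k a c) := by
  have h := vmax_pos k a c
  simp only [Finset.mem_Icc, fthr]
  exact ⟨le_max_left _ _, max_le (by omega) (min_le_left _ _)⟩

lemma gthr_mem (m n : ℤ) (hm : m ∈ Finset.Icc (-(vmax k a c)) (vmax k a c))
    (hn : n ∈ Finset.Icc (-(vmax k a c)) (vmax k a c)) :
    gthr k a c m n ∈ Finset.Icc (-(vmax k a c)) (vmax k a c) := by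
  have h := vmax_pos k a c
  simp only [Finset.mem_Icc] at hm hn ⊢
  simp only [gthr, fthr]
  rw [max_def, min_def]
  split_ifs <;> omega

/-- `f` on the value range. -/
def fV (m n : Vr k a c) : Vr k a c := ⟨fthr k a c m n, fthr_mem k a c m n⟩

/-- `g` on the value range. -/
def gV (m n : Vr k a c) : Vr k a c := ⟨gthr k a c m n, gthr_mem k a c m n m.2 n.2⟩

instance : DecidableEq (Vr k a c) := by unfold Vr; infer_instance

noncomputable instance : Fintype (Vr k a c) := by unfold Vr; infer_instance

instance : DecidableEq (Qthr k a c) := by infer_instance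

noncomputable instance : Fintype (Qthr k a c) := by infer_instance

/-- Non-silent transitions of the threshold protocol:
`(1, n, o), (l, n', o') ↦ (1, f(n, n'), b(n, n')), (0, g(n, n'), b(n, n'))`. -/
def IsThrTrans (t : PTrans (Qthr k a c)) : Prop :=
  ∃ (n n' : Vr k a c) (l o o' : Bool),
    t = ((true, n, o), (l, n', o'),
         (true, fV k a c n n', bthr k a c (n : ℤ) (n' : ℤ)),
         (false, gV k a c n n', bthr k a c (n : ℤ) (n' : ℤ)))

noncomputable instance : DecidablePred (IsThrTrans k a c) := fun t => by
  unfold IsThrTrans; infer_instance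

/-- Transition set of the threshold protocol. -/
noncomputable def Tthr : Finset (PTrans (Qthr k a c)) :=
  Finset.univ.filter fun t => IsThrTrans k a c t ∨ IsSilentPair t

lemma a_mem (i : Fin k) : a i ∈ Finset.Icc (-(vmax k a c)) (vmax k a c) := by
  have h1 : (a i).natAbs ≤ Finset.univ.sup fun j : Fin k => (a j).natAbs :=
    Finset.le_sup (f := fun j : Fin k => (a j).natAbs) (Finset.mem_univ i)
  have h2 : ((Finset.univ.sup fun j : Fin k => (a j).natAbs : ℕ) : ℤ) ≤ vmax k a c :=
    le_max_left _ _
  simp only [Finset.mem_Icc]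
  omega

/-- The threshold protocol `P_thr` computing `a₁x₁ + ⋯ + a_kx_k < c`. -/
noncomputable def Pthr : Protocol (Qthr k a c) (Fin k) where
  T := Tthr k a c
  total := fun p q => ⟨p, q, by
    simp only [Tthr, Finset.mem_filter, Finset.mem_univ, true_and]
    exact Or.inr ⟨p, q, rfl⟩⟩
  inp := fun i => (true, ⟨a i, a_mem k a c i⟩, decide (a i < c))
  out := fun q => q.2.2

/-- `val(C) = Σ_q C(q) · val(q)` where `val(ℓ, n, o) = n`. -/
def valC (C : Multiset (Qthr k a c)) : ℤ := (C.map fun q => ((q.2.1 : ℤ))).sum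

/-- `C` contains a leader. -/
def hasLeader (C : Multiset (Qthr k a c)) : Prop := ∃ q ∈ C, q.1 = true

/-- The value `0` of the value range. -/
def zeroV : Vr k a c :=
  ⟨0, by have := vmax_pos k a c; simp only [Finset.mem_Icc]; omega⟩

/-- `L₀ = {(1, x, 0) : c ≤ x ≤ vmax}`. -/
noncomputable def L0set : Finset (Qthr k a c) :=
  Finset.univ.filter fun q =>
    q.1 = true ∧ q.2.2 = false ∧ c ≤ (q.2.1 : ℤ) ∧ (q.2.1 : ℤ) ≤ vmax k a c

/-- `L₁ = {(1, x, 1) : -vmax ≤ x < c}`. -/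
noncomputable def L1set : Finset (Qthr k a c) :=
  Finset.univ.filter fun q =>
    q.1 = true ∧ q.2.2 = true ∧ -(vmax k a c) ≤ (q.2.1 : ℤ) ∧ (q.2.1 : ℤ) < c

/-- `N₀ = {(0, 0, 0)}`. -/
def N0set : Finset (Qthr k a c) := {(false, zeroV k a c, false)}

/-- `N₁ = {(0, 0, 1)}`. -/
def N1set : Finset (Qthr k a c) := {(false, zeroV k a c, true)}

/-- `T₁ = {t ∈ T : pre t ≠ ⟦q, r⟧ for all q ∈ L₀, r ∈ N₁}`. -/
noncomputable def T1thr : Finset (PTrans (Qthr k a c)) :=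
  (Tthr k a c).filter fun t => ∀ q ∈ L0set k a c, ∀ r ∈ N1set k a c, pre t ≠ {q, r}

/-- `T₂ = T ∖ T₁`. -/
noncomputable def T2thr : Finset (PTrans (Qthr k a c)) := Tthr k a c \ T1thr k a c

/-- `S₁ = {t ∈ T : pre t ≠ ⟦q, r⟧ for all q ∈ L₁, r ∈ N₀}`. -/
noncomputable def S1thr : Finset (PTrans (Qthr k a c)) :=
  (Tthr k a c).filter fun t => ∀ q ∈ L1set k a c, ∀ r ∈ N0set k a c, pre t ≠ {q, r}

/-- `S₂ = T ∖ S₁`. -/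
noncomputable def S2thr : Finset (PTrans (Qthr k a c)) := Tthr k a c \ S1thr k a c

end Threshold

end PopProt
open PopProt in
/-- For the threshold protocol: solutions of the flow equations preserve `val`. -/
theorem threshold_flowEq_preserves_val
    (k : ℕ) (a : Fin k → ℤ) (c : ℤ) (hk : 1 ≤ k)
    (C C' : Multiset (Qthr k a c)) (hC : 2 ≤ Multiset.card C) (hC' : 2 ≤ Multiset.card C')
    (x : PTrans (Qthr k a c) → ℕ) (h : FlowEq (Pthr k a c).T C C' x) :
    valC k a c C = valC k a c C' := by
  classical
  set v : Qthr k a c → ℤ := fun q => ((q.2.1 : ℤ)) with hv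
  have expand : ∀ S : Multiset (Qthr k a c),
      (S.map v).sum = ∑ q : Qthr k a c, (S.count q : ℤ) * v q := by
    intro S
    induction S using Multiset.induction with
    | empty => simp
    | cons b s ih =>
      simp only [Multiset.map_cons, Multiset.sum_cons, ih, Multiset.count_cons]
      push_cast
      rw [Finset.sum_congr rfl (fun q _ => add_mul ((s.count q : ℤ)) _ (v q)),
        Finset.sum_add_distrib]
      have : ∑ q : Qthr k a c, (if q = b then (1 : ℤ) else 0) * v q = v b := by
        simp [ite_mul]
      rw [this]; ring
  have key : ∀ t ∈ (Pthr k a c).T,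
      (∑ q : Qthr k a c, ((post t).count q : ℤ) * v q)
        = ∑ q : Qthr k a c, ((pre t).count q : ℤ) * v q := by
    intro t ht
    rw [← expand, ← expand]
    have ht' : IsThrTrans k a c t ∨ IsSilentPair t := by
      simpa [Pthr, Tthr] using ht
    rcases ht' with h1 | h2
    · obtain ⟨n, n', l, o, o', rfl⟩ := h1
      simp only [pre, post, Multiset.insert_eq_cons, Multiset.map_cons,
        Multiset.map_singleton, Multiset.sum_cons, Multiset.sum_singleton, hv, fV, gV, gthr]
      ring
    · obtain ⟨p, q, rfl⟩ := h2
      simp [pre, post]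
  have hval : ∀ S : Multiset (Qthr k a c), valC k a c S = (S.map v).sum := fun S => rfl
  rw [hval, hval, expand, expand]
  have hz : ∑ q : Qthr k a c, (∑ t ∈ (Pthr k a c).T,
      (x t : ℤ) * (((post t).count q : ℤ) - ((pre t).count q : ℤ))) * v q = 0 := by
    rw [Finset.sum_congr rfl (fun q _ => Finset.sum_mul _ _ _), Finset.sum_comm]
    apply Finset.sum_eq_zero
    intro t ht
    have : ∑ q : Qthr k a c,
        (x t : ℤ) * (((post t).count q : ℤ) - ((pre t).count q : ℤ)) * v q
        = (x t : ℤ) * ((∑ q : Qthr k a c, ((post t).count q : ℤ) * v q)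
          - ∑ q : Qthr k a c, ((pre t).count q : ℤ) * v q) := by
      rw [← Finset.sum_sub_distrib, Finset.mul_sum]
      exact Finset.sum_congr rfl fun q _ => by ring
    rw [this, key t ht, sub_self, mul_zero]
  have step : ∀ q : Qthr k a c, (C'.count q : ℤ) * v q
      = (C.count q : ℤ) * v q + (∑ t ∈ (Pthr k a c).T,
        (x t : ℤ) * (((post t).count q : ℤ) - ((pre t).count q : ℤ))) * v q := fun q => by
    rw [h q]; ring
  rw [Finset.sum_congr rfl (fun q _ => step q), Finset.sum_add_distrib, hz, add_zero]
end

section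
/- The threshold protocol P_thr satisfies StrongConsensus. -/
namespace PopProt

variable {Q : Type*} [Fintype Q] [DecidableEq Q]

lemma pair_eq_cases {α : Type*} {a b c d : α} (h : ({a, b} : Multiset α) = {c, d}) :
    (a = c ∧ b = d) ∨ (a = d ∧ b = c) := by
  classical
  have ha : a ∈ ({c, d} : Multiset α) := h ▸ (by simp)
  simp only [Multiset.insert_eq_cons, Multiset.mem_cons, Multiset.mem_singleton] at ha
  rcases ha with rfl | rfl
  · exact Or.inl ⟨rfl, Multiset.singleton_inj.mp ((Multiset.cons_inj_right a).mp h)⟩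
  · rw [Multiset.pair_comm c a] at h
    exact Or.inr ⟨rfl, Multiset.singleton_inj.mp ((Multiset.cons_inj_right a).mp h)⟩

lemma pair_le_of_mem_erase {p q : Q} {C : Multiset Q} (hp : p ∈ C) (hq : q ∈ C.erase p) :
    ({p, q} : Multiset Q) ≤ C := by
  rw [← Multiset.cons_erase hp, Multiset.insert_eq_cons, Multiset.cons_le_cons_iff,
    Multiset.singleton_le]
  exact hq

lemma sum_map_eq (M : Multiset Q) (w : Q → ℤ) :
    (M.map w).sum = ∑ q, (M.count q : ℤ) * w q := by
  induction M using Multiset.induction_on with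
  | empty => simp
  | cons a s ih =>
    simp only [Multiset.map_cons, Multiset.sum_cons, ih, Multiset.count_cons]
    have hrw : ∀ q : Q, ((s.count q + if q = a then 1 else 0 : ℕ) : ℤ) * w q
        = (s.count q : ℤ) * w q + (if q = a then w q else 0) := by
      intro q; split <;> push_cast <;> ring
    rw [Finset.sum_congr rfl fun q _ => hrw q, Finset.sum_add_distrib]
    simp [add_comm]

lemma flow_weight {T : Finset (PTrans Q)} {C C' : Multiset Q} {x : PTrans Q → ℕ}
    (h : FlowEq T C C' x) (w : Q → ℤ)
    (hw : ∀ t ∈ T, ((post t).map w).sum = ((pre t).map w).sum) :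
    (C'.map w).sum = (C.map w).sum := by
  rw [sum_map_eq, sum_map_eq]
  have key : ∀ q : Q, (C'.count q : ℤ) * w q = (C.count q : ℤ) * w q +
      ∑ t ∈ T, (x t : ℤ) * ((((post t).count q : ℤ) - ((pre t).count q : ℤ)) * w q) := by
    intro q
    rw [h q, add_mul, Finset.sum_mul]
    simp [mul_assoc]
  rw [Finset.sum_congr rfl fun q _ => key q, Finset.sum_add_distrib, Finset.sum_comm]
  have hz : ∀ t ∈ T,
      ∑ q, (x t : ℤ) * ((((post t).count q : ℤ) - ((pre t).count q : ℤ)) * w q) = 0 := by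
    intro t ht
    rw [← Finset.mul_sum]
    have h1 := hw t ht
    rw [sum_map_eq, sum_map_eq] at h1
    have h2 : ∑ q, ((((post t).count q : ℤ) - ((pre t).count q : ℤ)) * w q) = 0 := by
      simp only [sub_mul, Finset.sum_sub_distrib]
      omega
    rw [h2, mul_zero]
  rw [Finset.sum_congr rfl hz, Finset.sum_const_zero, add_zero]

end PopProt

namespace PopProt

section ThresholdProof

variable (k : ℕ) (a : Fin k → ℤ) (c : ℤ)

lemma pre_post_thr (n n' : Vr k a c) (l o o' : Bool) :
    pre (((true, n, o), (l, n', o'),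
         (true, fV k a c n n', bthr k a c (n : ℤ) (n' : ℤ)),
         (false, gV k a c n n', bthr k a c (n : ℤ) (n' : ℤ))) : PTrans (Qthr k a c))
      = {(true, n, o), (l, n', o')} ∧
    post (((true, n, o), (l, n', o'),
         (true, fV k a c n n', bthr k a c (n : ℤ) (n' : ℤ)),
         (false, gV k a c n n', bthr k a c (n : ℤ) (n' : ℤ))) : PTrans (Qthr k a c))
      = {(true, fV k a c n n', bthr k a c (n : ℤ) (n' : ℤ)),
         (false, gV k a c n n', bthr k a c (n : ℤ) (n' : ℤ))} := ⟨rfl, rfl⟩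

lemma potreach_leader {C C' : Multiset (Qthr k a c)} {x : PTrans (Qthr k a c) → ℕ}
    (hpr : PotReach (Tthr k a c) C C' x) (hC : ∃ q ∈ C, q.1 = true) :
    ∃ q ∈ C', q.1 = true := by
  by_contra hne
  push_neg at hne
  obtain ⟨hflow, htrap, -⟩ := hpr
  set R : Finset (Qthr k a c) := Finset.univ.filter (fun q => q.1 = true) with hRdef
  have hR : IsTrap (Tthr k a c) (suppIn (Tthr k a c) x) R := by
    intro t ht
    rw [Finset.mem_inter] at ht
    obtain ⟨hpost, -⟩ := ht
    rw [postSetOf, Finset.mem_filter] at hpost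
    obtain ⟨htT, q0, hq0R, hq0⟩ := hpost
    rw [preSetOf, Finset.mem_filter]
    refine ⟨htT, ?_⟩
    rcases (Finset.mem_filter.mp htT).2 with hthr | hsp
    · obtain ⟨n, n', l, o, o', rfl⟩ := hthr
      refine ⟨(true, fV k a c n n', bthr k a c (n : ℤ) (n' : ℤ)), ?_, ?_⟩
      · simp [hRdef]
      · simp [post]
    · obtain ⟨p, q, rfl⟩ := hsp
      exact ⟨q0, hq0R, hq0⟩
  have hnotin : ∀ q ∈ R, q ∉ C' := by
    intro q hq hqC'
    exact absurd (hne q hqC') (by simpa [hRdef] using (Finset.mem_filter.mp hq).2)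
  have hemp := htrap R hR hnotin
  have hcc : ∀ q, C'.count q = C.count q := by
    intro q
    have hfq := hflow q
    have hz : ∀ t ∈ Tthr k a c,
        (x t : ℤ) * (((post t).count q : ℤ) - ((pre t).count q : ℤ)) = 0 := by
      intro t ht
      by_cases hx : x t = 0
      · simp [hx]
      · have hts : t ∈ suppIn (Tthr k a c) x := Finset.mem_filter.mpr ⟨ht, hx⟩
        have htp : t ∉ preSetOf (Tthr k a c) R := by
          intro hmem
          have : t ∈ preSetOf (Tthr k a c) R ∩ suppIn (Tthr k a c) x :=
            Finset.mem_inter.mpr ⟨hmem, hts⟩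
          rw [hemp] at this
          exact absurd this (Finset.notMem_empty t)
        have hsil : pre t = post t := by
          rcases (Finset.mem_filter.mp ht).2 with hthr | hsp
          · exfalso
            obtain ⟨n, n', l, o, o', rfl⟩ := hthr
            refine htp (Finset.mem_filter.mpr ⟨ht,
              ⟨(true, fV k a c n n', bthr k a c (n : ℤ) (n' : ℤ)), ?_, ?_⟩⟩)
            · simp [hRdef]
            · simp [post]
          · obtain ⟨p, q2, rfl⟩ := hsp
            rfl
        rw [hsil]
        ring
    rw [Finset.sum_congr rfl hz, Finset.sum_const_zero, add_zero] at hfq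
    exact_mod_cast hfq
  obtain ⟨q, hqC, hq1⟩ := hC
  have : q ∈ C' := by
    rw [← Multiset.count_pos, hcc]
    rwa [Multiset.count_pos]
  exact absurd hq1 (hne q this)

lemma terminal_interaction {C' : Multiset (Qthr k a c)}
    (hterm : Terminal (Tthr k a c) C')
    {n : Vr k a c} {o : Bool} {q : Qthr k a c}
    (hp : (true, n, o) ∈ C') (hq : q ∈ C'.erase (true, n, o)) :
    q.1 = false ∧ n = fV k a c n q.2.1 ∧ o = bthr k a c (n : ℤ) (q.2.1 : ℤ) ∧
      q.2.2 = bthr k a c (n : ℤ) (q.2.1 : ℤ) := by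
  obtain ⟨lq, n', o'⟩ := q
  set t : PTrans (Qthr k a c) :=
    ((true, n, o), (lq, n', o'),
     (true, fV k a c n n', bthr k a c (n : ℤ) (n' : ℤ)),
     (false, gV k a c n n', bthr k a c (n : ℤ) (n' : ℤ))) with htdef
  have ht : t ∈ Tthr k a c := by
    rw [Tthr, Finset.mem_filter]
    exact ⟨Finset.mem_univ _, Or.inl ⟨n, n', lq, o, o', rfl⟩⟩
  have hpre : pre t ≤ C' := pair_le_of_mem_erase hp hq
  have hsil := hterm t ht hpre
  rw [SilentT] at hsil
  have hpe : ({((true, n, o) : Qthr k a c), (lq, n', o')} : Multiset (Qthr k a c)) =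
      {(true, fV k a c n n', bthr k a c (n : ℤ) (n' : ℤ)),
       (false, gV k a c n n', bthr k a c (n : ℤ) (n' : ℤ))} := hsil
  rcases pair_eq_cases hpe with ⟨h1, h2⟩ | ⟨h1, h2⟩
  · simp only [Prod.mk.injEq] at h1 h2
    exact ⟨h2.1, h1.2.1, h1.2.2, h2.2.2⟩
  · exact absurd (congrArg Prod.fst h1) (by simp)

end ThresholdProof

end PopProt

namespace PopProt

section ThresholdProof2

variable (k : ℕ) (a : Fin k → ℤ) (c : ℤ)

lemma multiset_sum_nonpos {s : Multiset ℤ} (h : ∀ x ∈ s, x ≤ 0) : s.sum ≤ 0 := by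
  induction s using Multiset.induction_on with
  | empty => simp
  | cons b t ih =>
    rw [Multiset.sum_cons]
    have h1 := h b (Multiset.mem_cons_self b t)
    have h2 := ih fun x hx => h x (Multiset.mem_cons_of_mem hx)
    omega

lemma thr_iff (n : ℤ) (hn1 : -(vmax k a c) ≤ n) (hn2 : n ≤ vmax k a c)
    (D : Multiset ℤ) (hD : ∀ m ∈ D, n = fthr k a c n m) :
    (n < c ↔ n + D.sum < c) := by
  have hVc : |c| + 1 ≤ vmax k a c := le_max_right _ _
  have hV0 : 0 < vmax k a c := vmax_pos k a c
  have hc1 : c ≤ |c| := le_abs_self c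
  have hc2 : -|c| ≤ c := neg_abs_le c
  by_cases hnV : n = vmax k a c
  · have hs : 0 ≤ D.sum := Multiset.sum_nonneg fun m hm => by
      have h := hD m hm; rw [fthr] at h; omega
    omega
  · by_cases hnV' : n = -(vmax k a c)
    · have hs : D.sum ≤ 0 := multiset_sum_nonpos fun m hm => by
        have h := hD m hm; rw [fthr] at h; omega
      omega
    · have hs : D.sum = 0 := Multiset.sum_eq_zero fun m hm => by
        have h := hD m hm; rw [fthr] at h; omega
      omega

end ThresholdProof2

end PopProt

open PopProt in
/-- Proposition: the threshold protocol `P_thr` satisfies StrongConsensus. -/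
theorem threshold_strongConsensus
    (k : ℕ) (a : Fin k → ℤ) (c : ℤ) (hk : 1 ≤ k) :
    StrongConsensus (Pthr k a c) := by
  intro X hX
  refine ⟨decide (valC k a c (init (Pthr k a c) X) < c), ?_⟩
  intro C' x hpr hterm
  have hflow : FlowEq (Tthr k a c) (init (Pthr k a c) X) C' x := hpr.1
  have hterm' : Terminal (Tthr k a c) C' := hterm
  -- value preservation
  have hval : valC k a c C' = valC k a c (init (Pthr k a c) X) := by
    refine flow_weight hflow (fun q => ((q.2.1 : ℤ))) ?_
    intro t ht
    rcases (Finset.mem_filter.mp ht).2 with hthr | hsp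
    · obtain ⟨n, n', l, o, o', rfl⟩ := hthr
      simp only [pre, post, Multiset.insert_eq_cons, Multiset.map_cons,
        Multiset.map_singleton, Multiset.sum_cons, Multiset.sum_singleton]
      show ((fV k a c n n' : ℤ)) + ((gV k a c n n' : ℤ)) = (n : ℤ) + (n' : ℤ)
      simp only [fV, gV, gthr]
      ring
    · obtain ⟨p, q, rfl⟩ := hsp
      rfl
  -- cardinality preservation
  have hcard : Multiset.card C' = Multiset.card X := by
    have h1 := flow_weight hflow (fun _ => (1 : ℤ)) (fun t ht => by simp [pre, post])
    have h2 : (Multiset.card C' : ℤ) = (Multiset.card (init (Pthr k a c) X) : ℤ) := by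
      simpa using h1
    have h3 : Multiset.card C' = Multiset.card (init (Pthr k a c) X) := by exact_mod_cast h2
    simpa [init] using h3
  -- a leader exists in C'
  have hlead : ∃ p ∈ C', p.1 = true := by
    refine potreach_leader k a c hpr ?_
    obtain ⟨i, hi⟩ : ∃ i, i ∈ X := Multiset.exists_mem_of_ne_zero (by
      intro h0; rw [h0] at hX; simp at hX)
    exact ⟨(Pthr k a c).inp i, Multiset.mem_map_of_mem _ hi, rfl⟩
  obtain ⟨p, hpC, hp1⟩ := hlead
  obtain ⟨lp, n, o⟩ := p
  have hlp : lp = true := hp1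
  subst hlp
  -- a non-leader companion exists
  have hc2 : 2 ≤ Multiset.card C' := hcard ▸ hX
  have hE : C'.erase (true, n, o) ≠ 0 := by
    intro h0
    have hcc := Multiset.card_erase_of_mem hpC
    rw [h0, Nat.pred_eq_sub_one] at hcc
    simp at hcc
    omega
  obtain ⟨q0, hq0⟩ := Multiset.exists_mem_of_ne_zero hE
  have hKT : ∀ q ∈ C'.erase (true, n, o),
      q.1 = false ∧ n = fV k a c n q.2.1 ∧ o = bthr k a c (n : ℤ) (q.2.1 : ℤ) ∧
        q.2.2 = bthr k a c (n : ℤ) (q.2.1 : ℤ) :=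
    fun q hq => terminal_interaction k a c hterm' hpC hq
  -- arithmetic
  set D : Multiset ℤ := (C'.erase (true, n, o)).map (fun q => ((q.2.1 : ℤ))) with hDdef
  have hDh : ∀ m ∈ D, (n : ℤ) = fthr k a c (n : ℤ) m := by
    intro m hm
    obtain ⟨q, hq, rfl⟩ := Multiset.mem_map.mp hm
    exact congrArg Subtype.val (hKT q hq).2.1
  have hiff := thr_iff k a c (n : ℤ) (Finset.mem_Icc.mp n.2).1 (Finset.mem_Icc.mp n.2).2 D hDh
  have hvc : valC k a c C' = (n : ℤ) + D.sum := by
    rw [valC]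
    conv_lhs => rw [← Multiset.cons_erase hpC]
    rw [Multiset.map_cons, Multiset.sum_cons]
  have hb : decide (valC k a c (init (Pthr k a c) X) < c) = decide ((n : ℤ) < c) := by
    rw [← hval, hvc]
    exact decide_eq_decide.mpr hiff.symm
  -- consensus
  intro q hq
  rw [← Multiset.cons_erase hpC] at hq
  rcases Multiset.mem_cons.mp hq with rfl | hq'
  · have h1 := (hKT q0 hq0).2.2.1
    have h2 : (n : ℤ) = fthr k a c (n : ℤ) (q0.2.1 : ℤ) :=
      congrArg Subtype.val (hKT q0 hq0).2.1
    show o = _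
    rw [h1, hb, bthr, ← h2]
  · have h1 := (hKT q hq').2.2.2
    have h2 : (n : ℤ) = fthr k a c (n : ℤ) (q.2.1 : ℤ) :=
      congrArg Subtype.val (hKT q hq').2.1
    show q.2.2 = _
    rw [h1, hb, bthr, ← h2]
end
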